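/- Let S be an additive abelian group. On the complex vector space L_S with basis {L_{α,β} : α,β ∈ S}, the bilinear product determined by L_{α,β} · L_{μ,ν} = δ_{α+μ, β−ν}·L_{α+μ, α+ν} is associative. Moreover, the bilinear form ⟨·,·⟩ on L_S determined by ⟨L_{α,β}, L_{μ,ν}⟩ = δ_{α+μ,0}·δ_{β,ν} is symmetric, non-degenerate, and associative, i.e., ⟨a·b, c⟩ = ⟨a, b·c⟩ for all a, b, c ∈ L_S. -/

import Mathlib

open scoped Classical

/-- The underlying vector space of `L_S`: finitely supported functions on `S × S`,
with standard basis `{L_{α,β} : α, β ∈ S}`. -/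
abbrev LSpace (S : Type*) := (S × S) →₀ ℂ

/-- The basis element `L_{α,β}`. -/
noncomputable def Lgen {S : Type*} (α β : S) : LSpace S := Finsupp.single (α, β) 1

/-- The product of two basis elements:
`L_{α,β} · L_{μ,ν} = δ_{α+μ, β−ν} · L_{α+μ, α+ν}`. -/
noncomputable def LmulBasis {S : Type*} [AddCommGroup S] (p q : S × S) : LSpace S :=
  if p.1 + q.1 = p.2 - q.2 then Finsupp.single (p.1 + q.1, p.1 + q.2) 1 else 0

/-- The bilinear product on `L_S` determined by its values on basis elements. -/
noncomputable def Lmul {S : Type*} [AddCommGroup S] (a b : LSpace S) : LSpace S :=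
  a.sum fun p x => b.sum fun q y => (x * y) • LmulBasis p q

/-- The value of the bilinear form on two basis elements:
`⟨L_{α,β}, L_{μ,ν}⟩ = δ_{α+μ,0} · δ_{β,ν}`. -/
noncomputable def LformBasis {S : Type*} [AddCommGroup S] (p q : S × S) : ℂ :=
  if p.1 + q.1 = 0 ∧ p.2 = q.2 then 1 else 0

/-- The bilinear form on `L_S` determined by its values on basis elements. -/
noncomputable def Lform {S : Type*} [AddCommGroup S] (a b : LSpace S) : ℂ :=
  a.sum fun p x => b.sum fun q y => x * y * LformBasis p q

/-! ### Auxiliary lemmas -/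

noncomputable def LmulL {S : Type*} [AddCommGroup S] : LSpace S →ₗ[ℂ] LSpace S →ₗ[ℂ] LSpace S :=
  Finsupp.lsum ℂ fun p => .toSpanSingleton ℂ _ (Finsupp.lsum ℂ fun q => .toSpanSingleton ℂ _ (LmulBasis p q))

lemma LmulL_eq {S : Type*} [AddCommGroup S] (a b : LSpace S) : LmulL a b = Lmul a b := by
  simp [LmulL, Lmul, Finsupp.lsum_apply, Finsupp.sum_apply', LinearMap.toSpanSingleton_apply,
    Finsupp.smul_sum, smul_smul]

noncomputable def LformL {S : Type*} [AddCommGroup S] : LSpace S →ₗ[ℂ] LSpace S →ₗ[ℂ] ℂ :=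
  Finsupp.lsum ℂ fun p => .toSpanSingleton ℂ _ (Finsupp.lsum ℂ fun q => .toSpanSingleton ℂ _ (LformBasis p q))

lemma LformL_eq {S : Type*} [AddCommGroup S] (a b : LSpace S) : LformL a b = Lform a b := by
  simp [LformL, Lform, Finsupp.lsum_apply, Finsupp.sum_apply', LinearMap.toSpanSingleton_apply,
    Finsupp.mul_sum, smul_eq_mul, mul_assoc]

lemma Lmul_zero_left {S : Type*} [AddCommGroup S] (b : LSpace S) : Lmul 0 b = 0 := by
  simp [Lmul]
lemma Lmul_zero_right {S : Type*} [AddCommGroup S] (a : LSpace S) : Lmul a 0 = 0 := by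
  simp [Lmul]
lemma Lform_zero_left {S : Type*} [AddCommGroup S] (b : LSpace S) : Lform 0 b = 0 := by
  simp [Lform]
lemma Lform_zero_right {S : Type*} [AddCommGroup S] (a : LSpace S) : Lform a 0 = 0 := by
  simp [Lform]

lemma Lmul_add_left {S : Type*} [AddCommGroup S] (a a' b : LSpace S) :
    Lmul (a + a') b = Lmul a b + Lmul a' b := by
  rw [← LmulL_eq, ← LmulL_eq, ← LmulL_eq, map_add, LinearMap.add_apply]
lemma Lmul_add_right {S : Type*} [AddCommGroup S] (a b b' : LSpace S) :
    Lmul a (b + b') = Lmul a b + Lmul a b' := by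
  rw [← LmulL_eq, ← LmulL_eq, ← LmulL_eq, map_add]
lemma Lmul_smul_left {S : Type*} [AddCommGroup S] (s : ℂ) (a b : LSpace S) :
    Lmul (s • a) b = s • Lmul a b := by
  rw [← LmulL_eq, ← LmulL_eq, map_smul, LinearMap.smul_apply]
lemma Lmul_smul_right {S : Type*} [AddCommGroup S] (s : ℂ) (a b : LSpace S) :
    Lmul a (s • b) = s • Lmul a b := by
  rw [← LmulL_eq, ← LmulL_eq, map_smul]

lemma Lform_add_left {S : Type*} [AddCommGroup S] (a a' b : LSpace S) :
    Lform (a + a') b = Lform a b + Lform a' b := by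
  rw [← LformL_eq, ← LformL_eq, ← LformL_eq, map_add, LinearMap.add_apply]
lemma Lform_add_right {S : Type*} [AddCommGroup S] (a b b' : LSpace S) :
    Lform a (b + b') = Lform a b + Lform a b' := by
  rw [← LformL_eq, ← LformL_eq, ← LformL_eq, map_add]
lemma Lform_smul_left {S : Type*} [AddCommGroup S] (s : ℂ) (a b : LSpace S) :
    Lform (s • a) b = s • Lform a b := by
  rw [← LformL_eq, ← LformL_eq, map_smul, LinearMap.smul_apply]
lemma Lform_smul_right {S : Type*} [AddCommGroup S] (s : ℂ) (a b : LSpace S) :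
    Lform a (s • b) = s • Lform a b := by
  rw [← LformL_eq, ← LformL_eq, map_smul]

lemma Lmul_single {S : Type*} [AddCommGroup S] (p q : S × S) (x y : ℂ) :
    Lmul (Finsupp.single p x) (Finsupp.single q y) = (x * y) • LmulBasis p q := by
  rw [Lmul]
  rw [Finsupp.sum_single_index, Finsupp.sum_single_index] <;> simp

lemma Lform_single {S : Type*} [AddCommGroup S] (p q : S × S) (x y : ℂ) :
    Lform (Finsupp.single p x) (Finsupp.single q y) = x * y * LformBasis p q := by
  rw [Lform]
  rw [Finsupp.sum_single_index, Finsupp.sum_single_index] <;> simp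

lemma mulBasis_assoc {S : Type*} [AddCommGroup S] (p q r : S × S) :
    Lmul (LmulBasis p q) (Finsupp.single r 1) = Lmul (Finsupp.single p 1) (LmulBasis q r) := by
  obtain ⟨a, b⟩ := p; obtain ⟨c, d⟩ := q; obtain ⟨e, f⟩ := r
  simp only [LmulBasis]
  by_cases h1 : a + c = b - d <;> by_cases h2 : c + e = d - f
  · rw [if_pos h1, if_pos h2, Lmul_single, Lmul_single]
    simp only [one_mul, one_smul, LmulBasis]
    have e1 : a + c + e = a + d - f := by rw [add_assoc, h2]; abel
    have e2 : a + (c + e) = b - (c + f) := by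
      have hb : a + c + d = b := eq_sub_iff_add_eq.mp h1
      rw [h2, ← hb]; abel
    rw [if_pos e1, if_pos e2, add_assoc a c e, add_assoc a c f]
  · rw [if_pos h1, if_neg h2, Lmul_single, Lmul_zero_right]
    simp only [one_mul, one_smul, LmulBasis]
    exact if_neg fun hc => h2 (add_left_cancel (a := a) (by rw [← add_assoc, hc]; abel))
  · rw [if_neg h1, if_pos h2, Lmul_zero_left, Lmul_single]
    simp only [one_mul, one_smul, LmulBasis]
    refine (if_neg fun hc => h1 ?_).symm
    have h3 : a + (c + e) + (c + f) = b := eq_sub_iff_add_eq.mp hc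
    rw [eq_sub_iff_add_eq, ← h3, h2]; abel
  · rw [if_neg h1, if_neg h2, Lmul_zero_left, Lmul_zero_right]

lemma formBasis_assoc {S : Type*} [AddCommGroup S] (p q r : S × S) :
    Lform (LmulBasis p q) (Finsupp.single r 1) = Lform (Finsupp.single p 1) (LmulBasis q r) := by
  obtain ⟨a, b⟩ := p; obtain ⟨c, d⟩ := q; obtain ⟨e, f⟩ := r
  simp only [LmulBasis]
  by_cases h1 : a + c = b - d <;> by_cases h2 : c + e = d - f
  · rw [if_pos h1, if_pos h2, Lform_single, Lform_single]
    simp only [one_mul, LformBasis]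
    have hiff : (a + c + e = 0 ∧ a + d = f) ↔ (a + (c + e) = 0 ∧ b = c + f) := by
      have hb : a + c + d = b := eq_sub_iff_add_eq.mp h1
      constructor
      · rintro ⟨u, v⟩
        refine ⟨by rw [← add_assoc]; exact u, ?_⟩
        rw [← hb, ← v]; abel
      · rintro ⟨u, v⟩
        refine ⟨by rw [add_assoc]; exact u, ?_⟩
        have hd : c + e + f = d := eq_sub_iff_add_eq.mp h2
        calc a + d = a + (c + e) + f := by rw [← hd]; abel
          _ = f := by rw [u, zero_add]
    rw [if_congr hiff rfl rfl]
  · rw [if_pos h1, if_neg h2, Lform_single, Lform_zero_right]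
    simp only [one_mul, LformBasis]
    refine if_neg ?_
    rintro ⟨u, v⟩
    apply h2
    rw [eq_sub_iff_add_eq, ← v, show c + e + (a + d) = (a + c + e) + d from by abel, u, zero_add]
  · rw [if_neg h1, if_pos h2, Lform_zero_left, Lform_single]
    simp only [one_mul, LformBasis]
    refine (if_neg ?_).symm
    rintro ⟨u, v⟩
    apply h1
    have hd : c + e + f = d := eq_sub_iff_add_eq.mp h2
    rw [eq_sub_iff_add_eq, ← hd, v,
      show a + c + (c + e + f) = (a + (c + e)) + (c + f) from by abel, u, zero_add]
  · rw [if_neg h1, if_neg h2, Lform_zero_left, Lform_zero_right]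

lemma formBasis_symm {S : Type*} [AddCommGroup S] (p q : S × S) :
    LformBasis p q = LformBasis q p := by
  simp only [LformBasis, add_comm q.1 p.1, eq_comm (a := q.2)]

lemma Lform_single_one {S : Type*} [AddCommGroup S] (a : LSpace S) (q : S × S) :
    Lform a (Finsupp.single q 1) = a.sum fun p x => x * LformBasis p q := by
  rw [Lform]
  apply Finsupp.sum_congr
  intro p _
  rw [Finsupp.sum_single_index] <;> simp

theorem stmt6 {S : Type*} [AddCommGroup S] :
    -- the product is associative
    (∀ a b c : LSpace S, Lmul (Lmul a b) c = Lmul a (Lmul b c)) ∧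
    -- the form is symmetric
    (∀ a b : LSpace S, Lform a b = Lform b a) ∧
    -- the form is non-degenerate
    (∀ a : LSpace S, (∀ b : LSpace S, Lform a b = 0) → a = 0) ∧
    -- the form is associative: `⟨a·b, c⟩ = ⟨a, b·c⟩`
    (∀ a b c : LSpace S, Lform (Lmul a b) c = Lform a (Lmul b c)) := by
  refine ⟨?_, ?_, ?_, ?_⟩
  · -- associativity of the product
    intro a b c
    induction a using Finsupp.induction_linear with
    | zero => simp [Lmul_zero_left]
    | add f g hf hg => rw [Lmul_add_left, Lmul_add_left, Lmul_add_left, hf, hg]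
    | single p x =>
      induction b using Finsupp.induction_linear with
      | zero => simp [Lmul_zero_left, Lmul_zero_right]
      | add f g hf hg => rw [Lmul_add_right, Lmul_add_left, Lmul_add_left, Lmul_add_right, hf, hg]
      | single q y =>
        induction c using Finsupp.induction_linear with
        | zero => simp [Lmul_zero_right]
        | add f g hf hg => rw [Lmul_add_right, Lmul_add_right, Lmul_add_right, hf, hg]
        | single r z =>
          have hx : (Finsupp.single p x : LSpace S) = x • Finsupp.single p 1 := by
            rw [Finsupp.smul_single', mul_one]
          have hz : (Finsupp.single r z : LSpace S) = z • Finsupp.single r 1 := by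
            rw [Finsupp.smul_single', mul_one]
          rw [Lmul_single p q, Lmul_smul_left, hz, Lmul_smul_right, mulBasis_assoc,
            Lmul_smul_right, Lmul_single q r, Lmul_smul_right, Lmul_smul_right, hx, Lmul_smul_left]
          simp only [smul_smul]
          congr 1
          ring
  · -- symmetry of the form
    intro a b
    induction a using Finsupp.induction_linear with
    | zero => simp [Lform_zero_left, Lform_zero_right]
    | add f g hf hg => rw [Lform_add_left, Lform_add_right, hf, hg]
    | single p x =>
      induction b using Finsupp.induction_linear with
      | zero => simp [Lform_zero_left, Lform_zero_right]
      | add f g hf hg => rw [Lform_add_left, Lform_add_right, hf, hg]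
      | single q y => rw [Lform_single, Lform_single, formBasis_symm, mul_comm x y]
  · -- non-degeneracy of the form
    intro a ha
    ext pq
    obtain ⟨α, β⟩ := pq
    have h := ha (Finsupp.single (-α, β) 1)
    rw [Lform_single_one] at h
    have hb : (a.sum fun p x => x * LformBasis p (-α, β)) = a (α, β) := by
      rw [show (fun (p : S × S) (x : ℂ) => x * LformBasis p (-α, β)) =
          fun p x => if p = (α, β) then x else 0 from ?_]
      · rw [Finsupp.sum_ite_eq']
        split
        · rfl
        · exact (Finsupp.notMem_support_iff.mp (by assumption)).symm
      · funext p x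
        obtain ⟨u, v⟩ := p
        simp only [LformBasis, mul_ite, mul_one, mul_zero, Prod.mk.injEq]
        congr 1
        simp [add_neg_eq_zero]
    rw [hb] at h
    simpa using h
  · -- associativity of the form w.r.t. the product
    intro a b c
    induction a using Finsupp.induction_linear with
    | zero => simp [Lmul_zero_left, Lform_zero_left]
    | add f g hf hg => rw [Lmul_add_left, Lform_add_left, Lform_add_left, hf, hg]
    | single p x =>
      induction b using Finsupp.induction_linear with
      | zero => simp [Lmul_zero_left, Lmul_zero_right, Lform_zero_left, Lform_zero_right]
      | add f g hf hg =>
        rw [Lmul_add_right, Lform_add_left, Lmul_add_left, Lform_add_right, hf, hg]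
      | single q y =>
        induction c using Finsupp.induction_linear with
        | zero => simp [Lmul_zero_right, Lform_zero_right]
        | add f g hf hg => rw [Lform_add_right, Lmul_add_right, Lform_add_right, hf, hg]
        | single r z =>
          have hx : (Finsupp.single p x : LSpace S) = x • Finsupp.single p 1 := by
            rw [Finsupp.smul_single', mul_one]
          have hz : (Finsupp.single r z : LSpace S) = z • Finsupp.single r 1 := by
            rw [Finsupp.smul_single', mul_one]
          rw [Lmul_single p q, Lform_smul_left, hz, Lform_smul_right, formBasis_assoc,
            Lmul_smul_right, Lmul_single q r, Lform_smul_right, Lform_smul_right, hx, Lform_smul_left]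
          simp only [smul_smul]
          congr 1
          ring
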